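/- For every n ≥ 1, the number of permutations σ of {1,…,n} with exactly k excedances and m fixed points equals the number of permutations τ of {1,…,n} with exactly k jumps and m left successions. Here an excedance of σ is an index i with σ(i) > i, a fixed point is an index with σ(i) = i; setting τ(0) = 0, a left succession of τ is an index i with 1 ≤ i ≤ n and τ(i-1) + 1 = τ(i), and a jump is an index i with 1 ≤ i ≤ n and τ(i) ≥ τ(i-1) + 2. -/

import Mathlib

open Finset

/-- The value `σ(i)` of a permutation of `{1,…,n}` at a one-based position `i`,
with the convention `σ(0) = 0` (and value `0` outside `[1,n]`). -/
def pv {n : ℕ} (σ : Equiv.Perm (Fin n)) (i : ℕ) : ℕ :=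
  if h : 1 ≤ i ∧ i ≤ n then ((σ ⟨i - 1, by omega⟩ : Fin n) : ℕ) + 1 else 0

/-- Number of excedances: indices `i` with `σ(i) > i`. -/
def exc {n : ℕ} (σ : Equiv.Perm (Fin n)) : ℕ :=
  ((Finset.Icc 1 n).filter (fun i => i < pv σ i)).card

/-- Number of fixed points: indices `i` with `σ(i) = i`. -/
def fixpt {n : ℕ} (σ : Equiv.Perm (Fin n)) : ℕ :=
  ((Finset.Icc 1 n).filter (fun i => pv σ i = i)).card

/-- Number of left successions: indices `1 ≤ i ≤ n` with `σ(i-1) + 1 = σ(i)`. -/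
def lsuc {n : ℕ} (σ : Equiv.Perm (Fin n)) : ℕ :=
  ((Finset.Icc 1 n).filter (fun i => pv σ (i - 1) + 1 = pv σ i)).card

/-- Number of jumps: indices `1 ≤ i ≤ n` with `σ(i) ≥ σ(i-1) + 2`. -/
def jump {n : ℕ} (σ : Equiv.Perm (Fin n)) : ℕ :=
  ((Finset.Icc 1 n).filter (fun i => pv σ (i - 1) + 2 ≤ pv σ i)).card


namespace EFJL

def wv {n : ℕ} (σ : Equiv.Perm (Fin n)) (i : ℕ) : ℕ :=
  if h : i < n then ((σ ⟨i, h⟩ : Fin n) : ℕ) else n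

def pw {n : ℕ} (σ : Equiv.Perm (Fin n)) (i : ℕ) : ℕ :=
  if i = 0 then 0 else wv σ (i - 1) + 1

def exc0 {n : ℕ} (σ : Equiv.Perm (Fin n)) : ℕ :=
  ((range n).filter (fun i => i < wv σ i)).card
def fix0 {n : ℕ} (σ : Equiv.Perm (Fin n)) : ℕ :=
  ((range n).filter (fun i => wv σ i = i)).card
def jmp0 {n : ℕ} (σ : Equiv.Perm (Fin n)) : ℕ :=
  ((range n).filter (fun i => pw σ i < wv σ i)).card
def lsc0 {n : ℕ} (σ : Equiv.Perm (Fin n)) : ℕ :=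
  ((range n).filter (fun i => wv σ i = pw σ i)).card

lemma wv_lt {n : ℕ} (σ : Equiv.Perm (Fin n)) {i : ℕ} (h : i < n) : wv σ i < n := by
  simp [wv, dif_pos h]

lemma wv_apply {n : ℕ} (σ : Equiv.Perm (Fin n)) {i : ℕ} (h : i < n) :
    wv σ i = ((σ ⟨i, h⟩ : Fin n) : ℕ) := by
  simp [wv, dif_pos h]

lemma wv_symm_wv {n : ℕ} (σ : Equiv.Perm (Fin n)) {i : ℕ} (h : i < n) :
    wv σ.symm (wv σ i) = i := by
  rw [wv_apply σ h, wv_apply σ.symm (σ ⟨i, h⟩).isLt]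
  simp

lemma wv_wv_symm {n : ℕ} (σ : Equiv.Perm (Fin n)) {j : ℕ} (h : j < n) :
    wv σ (wv σ.symm j) = j := by
  rw [wv_apply σ.symm h, wv_apply σ (σ.symm ⟨j, h⟩).isLt]
  simp

lemma wv_eq_iff {n : ℕ} (σ : Equiv.Perm (Fin n)) {i j : ℕ} (hi : i < n) (hj : j < n) :
    wv σ i = j ↔ i = wv σ.symm j := by
  constructor
  · rintro rfl; rw [wv_symm_wv σ hi]
  · rintro rfl; rw [wv_wv_symm σ hj]

lemma pw_le {n : ℕ} (σ : Equiv.Perm (Fin n)) (i : ℕ) (hi : i ≤ n) : pw σ i ≤ n := by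
  rcases Nat.eq_zero_or_pos i with h | h
  · simp [pw, h]
  · rw [pw, if_neg (by omega)]
    have : i - 1 < n := by omega
    have := wv_lt σ this
    omega

/-- conversion helper : shift `Icc 1 n` to `range n`. -/
lemma card_shift (n : ℕ) (P : ℕ → Prop) [DecidablePred P] :
    ((Icc 1 n).filter P).card = ((range n).filter (fun a => P (a + 1))).card := by
  refine Finset.card_bij' (fun i _ => i - 1) (fun a _ => a + 1) ?_ ?_ ?_ ?_
  · intro a ha
    simp only [mem_filter, mem_Icc, mem_range] at ha ⊢
    refine ⟨by omega, ?_⟩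
    have : a - 1 + 1 = a := by omega
    rw [this]; exact ha.2
  · intro a ha
    simp only [mem_filter, mem_Icc, mem_range] at ha ⊢
    exact ⟨by omega, ha.2⟩
  · intro a ha; simp only [mem_filter, mem_Icc] at ha; show a - 1 + 1 = a; omega
  · intro a ha; show a + 1 - 1 = a; omega



lemma pv_eq_pw {n : ℕ} (σ : Equiv.Perm (Fin n)) {j : ℕ} (hj : j ≤ n) :
    pv σ j = pw σ j := by
  rcases Nat.eq_zero_or_pos j with h | h
  · subst h; simp [pv, pw]
  · rw [pv, dif_pos ⟨h, hj⟩, pw, if_neg (by omega), wv_apply σ (show j - 1 < n by omega)]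

lemma cond_shift {n : ℕ} (σ : Equiv.Perm (Fin n)) {a : ℕ} (ha : a < n) :
    pv σ (a + 1) = wv σ a + 1 := by
  rw [pv_eq_pw σ (by omega), pw, if_neg (by omega), Nat.add_sub_cancel]

lemma exc_eq {n : ℕ} (σ : Equiv.Perm (Fin n)) : exc σ = exc0 σ := by
  rw [exc, exc0, card_shift]
  congr 1
  apply filter_congr
  intro a ha
  simp only [mem_range] at ha
  rw [cond_shift σ ha]
  omega

lemma fixpt_eq {n : ℕ} (σ : Equiv.Perm (Fin n)) : fixpt σ = fix0 σ := by
  rw [fixpt, fix0, card_shift]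
  congr 1
  apply filter_congr
  intro a ha
  simp only [mem_range] at ha
  rw [cond_shift σ ha]
  omega

lemma lsuc_eq {n : ℕ} (σ : Equiv.Perm (Fin n)) : lsuc σ = lsc0 σ := by
  rw [lsuc, lsc0, card_shift]
  congr 1
  apply filter_congr
  intro a ha
  simp only [mem_range] at ha
  rw [cond_shift σ ha, Nat.add_sub_cancel, pv_eq_pw σ (by omega)]
  omega

lemma jump_eq {n : ℕ} (σ : Equiv.Perm (Fin n)) : jump σ = jmp0 σ := by
  rw [jump, jmp0, card_shift]
  congr 1
  apply filter_congr
  intro a ha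
  simp only [mem_range] at ha
  rw [cond_shift σ ha, Nat.add_sub_cancel, pv_eq_pw σ (by omega)]
  omega


/-- The counting kernel: number of insertion slots producing statistics `(k,m)`
from a permutation with statistics `(e,f)`. -/
def g (n k m e f : ℕ) : ℕ :=
  (if k = e ∧ m = f + 1 then 1 else 0) + (if k = e ∧ m = f then e else 0)
  + (if k = e + 1 ∧ f = m + 1 then f else 0)
  + (if k = e + 1 ∧ m = f then n - e - f else 0)

lemma count_slots {N : ℕ} (stE stF : Fin (N + 1) → ℕ) (cl : Fin (N + 1) → Fin 4)
    (e f k m : ℕ)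
    (h0 : ∀ p, cl p = 0 → stE p = e ∧ stF p = f + 1)
    (h1 : ∀ p, cl p = 1 → stE p = e ∧ stF p = f)
    (h2 : ∀ p, cl p = 2 → stE p = e + 1 ∧ stF p + 1 = f)
    (h3 : ∀ p, cl p = 3 → stE p = e + 1 ∧ stF p = f)
    (c0 : (univ.filter fun p => cl p = 0).card = 1)
    (c1 : (univ.filter fun p => cl p = 1).card = e)
    (c2 : (univ.filter fun p => cl p = 2).card = f) :
    (univ.filter fun p => stE p = k ∧ stF p = m).card = g N k m e f := by
  have hpart : (univ : Finset (Fin (N + 1))).card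
      = ∑ c : Fin 4, ((univ : Finset (Fin (N+1))).filter fun p => cl p = c).card := by
    exact Finset.card_eq_sum_card_fiberwise (fun x _ => mem_univ (cl x))
  rw [Fin.sum_univ_four, c0, c1, c2, card_univ, Fintype.card_fin] at hpart
  have c3 : ((univ : Finset (Fin (N+1))).filter fun p => cl p = 3).card = N - e - f := by
    omega
  have hef : e + f ≤ N := by omega
  have hmain : (univ.filter fun p => stE p = k ∧ stF p = m).card
      = ∑ c : Fin 4, ((univ.filter fun p => stE p = k ∧ stF p = m).filter
          fun p => cl p = c).card :=
    Finset.card_eq_sum_card_fiberwise (fun x _ => mem_univ (cl x))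
  rw [Fin.sum_univ_four] at hmain
  have key : ∀ (c : Fin 4) (A B : ℕ), (∀ p, cl p = c → stE p = A ∧ stF p = B) →
      ((univ.filter fun p => stE p = k ∧ stF p = m).filter fun p => cl p = c).card
      = if k = A ∧ m = B then ((univ : Finset (Fin (N+1))).filter fun p => cl p = c).card
        else 0 := by
    intro c A B hAB
    rw [Finset.filter_filter]
    by_cases h : k = A ∧ m = B
    · rw [if_pos h]
      congr 1
      apply filter_congr
      intro p _
      constructor
      · rintro ⟨_, h2⟩; exact h2
      · intro hc
        obtain ⟨hE, hF⟩ := hAB p hc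
        exact ⟨⟨by omega, by omega⟩, hc⟩
    · rw [if_neg h, Finset.card_eq_zero, Finset.filter_eq_empty_iff]
      rintro p - ⟨⟨hE, hF⟩, hc⟩
      obtain ⟨hE', hF'⟩ := hAB p hc
      omega
  have e0 := key 0 e (f + 1) h0
  have e1 := key 1 e f h1
  have e3 := key 3 (e + 1) f h3
  -- class 2 needs care: stF p = f - 1 with f ≥ 1
  have e2 : ((univ.filter fun p => stE p = k ∧ stF p = m).filter fun p => cl p = 2).card
      = if k = e + 1 ∧ f = m + 1 then f else 0 := by
    by_cases hf : ∃ p, cl p = 2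
    · obtain ⟨p0, hp0⟩ := hf
      obtain ⟨hE0, hF0⟩ := h2 p0 hp0
      have := key 2 (e + 1) (stF p0) (fun p hp => by
        obtain ⟨a, b⟩ := h2 p hp
        exact ⟨a, by omega⟩)
      rw [this]
      by_cases h : k = e + 1 ∧ f = m + 1
      · rw [if_pos h, if_pos ⟨h.1, by omega⟩, c2]
      · rw [if_neg h, if_neg (by rintro ⟨a, b⟩; exact h ⟨a, by omega⟩)]
    · push_neg at hf
      have hc2 : ((univ : Finset (Fin (N+1))).filter fun p => cl p = 2) = ∅ := by
        rw [Finset.filter_eq_empty_iff]; intro p _; exact hf p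
      rw [hc2, Finset.card_empty] at c2
      have h2e : ((univ.filter fun p => stE p = k ∧ stF p = m).filter fun p => cl p = 2) = ∅ := by
        rw [Finset.filter_eq_empty_iff]; intro p _; exact hf p
      rw [h2e, Finset.card_empty]
      rw [if_neg]
      rintro ⟨-, hb⟩
      omega
  rw [hmain, e0, e1, e2, e3, c0, c1, c3, g]

lemma sum_split {n : ℕ} (F G : ℕ → ℕ) {i₀ : ℕ} (h₀ : i₀ < n)
    (h : ∀ i, i < n → i ≠ i₀ → F i = G i) :
    ∑ i ∈ range n, F i + G i₀ = ∑ i ∈ range n, G i + F i₀ := by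
  rw [← Finset.add_sum_erase _ F (mem_range.mpr h₀), ← Finset.add_sum_erase _ G (mem_range.mpr h₀)]
  have he : ∑ i ∈ (range n).erase i₀, F i = ∑ i ∈ (range n).erase i₀, G i := by
    apply Finset.sum_congr rfl
    intro i hi
    rw [Finset.mem_erase, mem_range] at hi
    exact h i hi.2 hi.1
  omega

section SideA

variable {n : ℕ} (σ' : Equiv.Perm (Fin n))

def insA (σ' : Equiv.Perm (Fin n)) (p : Fin (n + 1)) : Equiv.Perm (Fin (n + 1)) :=
  Equiv.Perm.decomposeFin.symm (p, σ')

lemma wvA_zero (p : Fin (n + 1)) : wv (insA σ' p) 0 = (p : ℕ) := by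
  rw [wv_apply _ (Nat.succ_pos n)]
  have : (⟨0, Nat.succ_pos n⟩ : Fin (n + 1)) = 0 := rfl
  rw [this, insA, Equiv.Perm.decomposeFin_symm_apply_zero]

lemma wvA_succ (p : Fin (n + 1)) {i : ℕ} (h : i < n) :
    wv (insA σ' p) (i + 1) = if wv σ' i + 1 = (p : ℕ) then 0 else wv σ' i + 1 := by
  rw [wv_apply _ (by omega : i + 1 < n + 1)]
  have h1 : (⟨i + 1, by omega⟩ : Fin (n + 1)) = (⟨i, h⟩ : Fin n).succ := rfl
  rw [h1, insA, Equiv.Perm.decomposeFin_symm_apply_succ, Equiv.swap_apply_def,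
    if_neg (Fin.succ_ne_zero _)]
  rw [wv_apply σ' h]
  by_cases hp : (σ' ⟨i, h⟩).succ = p
  · rw [if_pos hp, if_pos]
    · rfl
    · rw [← hp]; rfl
  · rw [if_neg hp, if_neg]
    · rfl
    · intro hc
      apply hp
      apply Fin.ext
      rw [← hc]; rfl

lemma insA_zero_exc : exc0 (insA σ' 0) = exc0 σ' := by
  rw [exc0, exc0, card_filter, card_filter, Finset.sum_range_succ']
  rw [wvA_zero]
  rw [if_neg (by simp)]
  rw [add_zero]
  apply Finset.sum_congr rfl
  intro i hi
  rw [mem_range] at hi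
  have hw : wv (insA σ' 0) (i + 1) = wv σ' i + 1 := by
    rw [wvA_succ σ' 0 hi, show ((0 : Fin (n+1)) : ℕ) = 0 from rfl, if_neg (by omega)]
  rw [hw]
  exact if_congr (by omega) rfl rfl

lemma insA_zero_fix : fix0 (insA σ' 0) = fix0 σ' + 1 := by
  rw [fix0, fix0, card_filter, card_filter, Finset.sum_range_succ']
  rw [wvA_zero]
  rw [if_pos (by simp)]
  congr 1
  apply Finset.sum_congr rfl
  intro i hi
  rw [mem_range] at hi
  have hw : wv (insA σ' 0) (i + 1) = wv σ' i + 1 := by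
    rw [wvA_succ σ' 0 hi, show ((0 : Fin (n+1)) : ℕ) = 0 from rfl, if_neg (by omega)]
  rw [hw]
  exact if_congr (by omega) rfl rfl

lemma excA (p : Fin (n + 1)) (hp : (p : ℕ) ≠ 0) :
    exc0 (insA σ' p) + (if wv σ'.symm ((p : ℕ) - 1) < (p : ℕ) - 1 then 1 else 0)
      = exc0 σ' + 1 := by
  have hq : (p : ℕ) - 1 < n := by have := p.isLt; omega
  set q : ℕ := (p : ℕ) - 1 with hqdef
  set i₀ : ℕ := wv σ'.symm q with hi₀def
  have hi₀ : i₀ < n := wv_lt σ'.symm hq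
  have hwv : wv σ' i₀ = q := wv_wv_symm σ' hq
  rw [exc0, exc0, card_filter, card_filter, Finset.sum_range_succ']
  rw [wvA_zero]
  rw [if_pos (by omega : 0 < (p : ℕ))]
  have key : ∑ i ∈ range n, (if i + 1 < wv (insA σ' p) (i + 1) then 1 else 0)
      + (if i₀ < wv σ' i₀ then 1 else 0)
      = ∑ i ∈ range n, (if i < wv σ' i then 1 else 0)
      + (if i₀ + 1 < wv (insA σ' p) (i₀ + 1) then 1 else 0) := by
    apply sum_split (fun i => if i + 1 < wv (insA σ' p) (i + 1) then 1 else 0)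
      (fun i => if i < wv σ' i then 1 else 0) hi₀
    intro i hin hne
    have hwq : wv σ' i ≠ q := by
      intro hc
      exact hne ((wv_eq_iff σ' hin hq).mp hc)
    have hw : wv (insA σ' p) (i + 1) = wv σ' i + 1 := by
      rw [wvA_succ σ' p hin, if_neg (by omega)]
    rw [hw]
    exact if_congr (by omega) rfl rfl
  have hz : wv (insA σ' p) (i₀ + 1) = 0 := by
    rw [wvA_succ σ' p hi₀, if_pos (by omega)]
  rw [hz] at key
  rw [hwv] at key
  simp only [Nat.not_lt_zero, if_false, add_zero] at key
  omega

lemma fixA (p : Fin (n + 1)) (hp : (p : ℕ) ≠ 0) :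
    fix0 (insA σ' p) + (if wv σ'.symm ((p : ℕ) - 1) = (p : ℕ) - 1 then 1 else 0)
      = fix0 σ' := by
  have hq : (p : ℕ) - 1 < n := by have := p.isLt; omega
  set q : ℕ := (p : ℕ) - 1 with hqdef
  set i₀ : ℕ := wv σ'.symm q with hi₀def
  have hi₀ : i₀ < n := wv_lt σ'.symm hq
  have hwv : wv σ' i₀ = q := wv_wv_symm σ' hq
  rw [fix0, fix0, card_filter, card_filter, Finset.sum_range_succ']
  rw [wvA_zero]
  rw [if_neg (by omega : ¬ ((p:ℕ) = 0))]
  have key : ∑ i ∈ range n, (if wv (insA σ' p) (i + 1) = i + 1 then 1 else 0)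
      + (if wv σ' i₀ = i₀ then 1 else 0)
      = ∑ i ∈ range n, (if wv σ' i = i then 1 else 0)
      + (if wv (insA σ' p) (i₀ + 1) = i₀ + 1 then 1 else 0) := by
    apply sum_split (fun i => if wv (insA σ' p) (i + 1) = i + 1 then 1 else 0)
      (fun i => if wv σ' i = i then 1 else 0) hi₀
    intro i hin hne
    have hwq : wv σ' i ≠ q := by
      intro hc
      exact hne ((wv_eq_iff σ' hin hq).mp hc)
    have hw : wv (insA σ' p) (i + 1) = wv σ' i + 1 := by
      rw [wvA_succ σ' p hin, if_neg (by omega)]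
    rw [hw]
    exact if_congr (by omega) rfl rfl
  have hz : wv (insA σ' p) (i₀ + 1) = 0 := by
    rw [wvA_succ σ' p hi₀, if_pos (by omega)]
  rw [hz] at key
  rw [hwv] at key
  rw [if_neg (by omega : ¬ ((0:ℕ) = i₀ + 1))] at key
  have hcomm : (if i₀ = q then (1:ℕ) else 0) = (if q = i₀ then 1 else 0) :=
    if_congr eq_comm rfl rfl
  omega

def clA (σ' : Equiv.Perm (Fin n)) (p : Fin (n + 1)) : Fin 4 :=
  if (p : ℕ) = 0 then 0
  else if wv σ'.symm ((p : ℕ) - 1) < (p : ℕ) - 1 then 1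
  else if wv σ'.symm ((p : ℕ) - 1) = (p : ℕ) - 1 then 2
  else 3

lemma clA0_iff (p : Fin (n + 1)) : clA σ' p = 0 ↔ (p : ℕ) = 0 := by
  rw [clA]; split_ifs <;> simp_all <;> decide

lemma clA1_iff (p : Fin (n + 1)) :
    clA σ' p = 1 ↔ ((p : ℕ) ≠ 0 ∧ wv σ'.symm ((p : ℕ) - 1) < (p : ℕ) - 1) := by
  rw [clA]; split_ifs <;> simp_all <;> decide

lemma clA2_iff (p : Fin (n + 1)) :
    clA σ' p = 2 ↔ ((p : ℕ) ≠ 0 ∧ wv σ'.symm ((p : ℕ) - 1) = (p : ℕ) - 1) := by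
  rw [clA]; split_ifs <;> simp_all
  all_goals omega

lemma clA3_iff (p : Fin (n + 1)) :
    clA σ' p = 3 ↔ ((p : ℕ) ≠ 0 ∧ (p : ℕ) - 1 < wv σ'.symm ((p : ℕ) - 1)) := by
  rw [clA]; split_ifs <;> simp_all
  all_goals omega

lemma cA0 : ((univ : Finset (Fin (n+1))).filter fun p => clA σ' p = 0).card = 1 := by
  have h : ((univ : Finset (Fin (n+1))).filter fun p => clA σ' p = 0) = {0} := by
    ext p
    simp only [mem_filter, mem_univ, true_and, mem_singleton, clA0_iff]
    constructor
    · intro h; exact Fin.ext h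
    · rintro rfl; rfl
  rw [h, card_singleton]

lemma cA1 : ((univ : Finset (Fin (n+1))).filter fun p => clA σ' p = 1).card = exc0 σ' := by
  rw [exc0]
  refine Finset.card_bij' (fun p _ => wv σ'.symm ((p : ℕ) - 1))
    (fun i hi => (⟨wv σ' i + 1, by
      have hilt : i < n := by simpa using (mem_filter.mp hi).1
      have := wv_lt σ' hilt; omega⟩ : Fin (n + 1))) ?_ ?_ ?_ ?_
  · intro p hp
    rw [mem_filter, clA1_iff] at hp
    obtain ⟨-, hp0, hlt⟩ := hp
    have hq : (p : ℕ) - 1 < n := by have := p.isLt; omega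
    rw [mem_filter, mem_range]
    exact ⟨wv_lt σ'.symm hq, by rw [wv_wv_symm σ' hq]; exact hlt⟩
  · intro i hi
    rw [mem_filter, mem_range] at hi
    obtain ⟨hin, hlt⟩ := hi
    rw [mem_filter, clA1_iff]
    refine ⟨mem_univ _, by simp, ?_⟩
    simp only [Nat.add_sub_cancel]
    rw [wv_symm_wv σ' hin]
    exact hlt
  · intro p hp
    rw [mem_filter, clA1_iff] at hp
    obtain ⟨-, hp0, hlt⟩ := hp
    have hq : (p : ℕ) - 1 < n := by have := p.isLt; omega
    apply Fin.ext
    simp only []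
    rw [wv_wv_symm σ' hq]
    omega
  · intro i hi
    rw [mem_filter, mem_range] at hi
    simp only [Nat.add_sub_cancel]
    rw [wv_symm_wv σ' hi.1]

lemma cA2 : ((univ : Finset (Fin (n+1))).filter fun p => clA σ' p = 2).card = fix0 σ' := by
  rw [fix0]
  refine Finset.card_bij' (fun p _ => wv σ'.symm ((p : ℕ) - 1))
    (fun i hi => (⟨wv σ' i + 1, by
      have hilt : i < n := by simpa using (mem_filter.mp hi).1
      have := wv_lt σ' hilt; omega⟩ : Fin (n + 1))) ?_ ?_ ?_ ?_
  · intro p hp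
    rw [mem_filter, clA2_iff] at hp
    obtain ⟨-, hp0, heq⟩ := hp
    have hq : (p : ℕ) - 1 < n := by have := p.isLt; omega
    rw [mem_filter, mem_range]
    exact ⟨wv_lt σ'.symm hq, by rw [wv_wv_symm σ' hq]; exact heq.symm⟩
  · intro i hi
    rw [mem_filter, mem_range] at hi
    obtain ⟨hin, heq⟩ := hi
    rw [mem_filter, clA2_iff]
    refine ⟨mem_univ _, by simp, ?_⟩
    simp only [Nat.add_sub_cancel]
    rw [wv_symm_wv σ' hin]
    omega
  · intro p hp
    rw [mem_filter, clA2_iff] at hp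
    obtain ⟨-, hp0, heq⟩ := hp
    have hq : (p : ℕ) - 1 < n := by have := p.isLt; omega
    apply Fin.ext
    simp only []
    rw [wv_wv_symm σ' hq]
    omega
  · intro i hi
    rw [mem_filter, mem_range] at hi
    simp only [Nat.add_sub_cancel]
    rw [wv_symm_wv σ' hi.1]

lemma sideA_count (k m : ℕ) :
    ((univ : Finset (Fin (n+1))).filter
        fun p => exc0 (insA σ' p) = k ∧ fix0 (insA σ' p) = m).card
      = g n k m (exc0 σ') (fix0 σ') := by
  apply count_slots (fun p => exc0 (insA σ' p)) (fun p => fix0 (insA σ' p)) (clA σ')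
  · intro p hp
    rw [clA0_iff] at hp
    have : p = 0 := Fin.ext hp
    subst this
    exact ⟨insA_zero_exc σ', insA_zero_fix σ'⟩
  · intro p hp
    rw [clA1_iff] at hp
    obtain ⟨hp0, hlt⟩ := hp
    have he := excA σ' p hp0
    have hf := fixA σ' p hp0
    rw [if_pos hlt] at he
    rw [if_neg (by omega)] at hf
    exact ⟨by omega, by omega⟩
  · intro p hp
    rw [clA2_iff] at hp
    obtain ⟨hp0, heq⟩ := hp
    have he := excA σ' p hp0
    have hf := fixA σ' p hp0
    rw [if_neg (by omega)] at he
    rw [if_pos heq] at hf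
    exact ⟨by omega, by omega⟩
  · intro p hp
    rw [clA3_iff] at hp
    obtain ⟨hp0, hgt⟩ := hp
    have he := excA σ' p hp0
    have hf := fixA σ' p hp0
    rw [if_neg (by omega)] at he
    rw [if_neg (by omega)] at hf
    exact ⟨by omega, by omega⟩
  · exact cA0 σ'
  · exact cA1 σ'
  · exact cA2 σ'

lemma recA (k m : ℕ) :
    ((univ : Finset (Equiv.Perm (Fin (n+1)))).filter
        fun σ => exc0 σ = k ∧ fix0 σ = m).card
      = ∑ σ' : Equiv.Perm (Fin n), g n k m (exc0 σ') (fix0 σ') := by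
  rw [card_filter]
  rw [← Equiv.sum_comp (Equiv.Perm.decomposeFin (n := n)).symm
      (fun σ => if exc0 σ = k ∧ fix0 σ = m then 1 else 0)]
  rw [Fintype.sum_prod_type]
  rw [Finset.sum_comm]
  apply Finset.sum_congr rfl
  intro σ' _
  rw [← sideA_count σ' k m, card_filter]
  rfl

end SideA

section SideB

variable {n : ℕ} (τ' : Equiv.Perm (Fin n))

def extL (τ' : Equiv.Perm (Fin n)) : Equiv.Perm (Fin (n + 1)) where
  toFun a := if h : (a : ℕ) < n then ⟨(τ' ⟨a, h⟩ : Fin n), Nat.lt_succ_of_lt (τ' ⟨a, h⟩).isLt⟩ else a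
  invFun a := if h : (a : ℕ) < n then ⟨(τ'.symm ⟨a, h⟩ : Fin n), Nat.lt_succ_of_lt (τ'.symm ⟨a, h⟩).isLt⟩ else a
  left_inv := by
    intro a
    by_cases h : (a : ℕ) < n
    · simp only [dif_pos h]
      have h2 : ((⟨(τ' ⟨a, h⟩ : Fin n), Nat.lt_succ_of_lt (τ' ⟨a, h⟩).isLt⟩ : Fin (n+1)) : ℕ) < n :=
        (τ' ⟨a, h⟩).isLt
      rw [dif_pos h2]
      apply Fin.ext
      simp
    · simp only [dif_neg h]
  right_inv := by
    intro a
    by_cases h : (a : ℕ) < n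
    · simp only [dif_pos h]
      have h2 : ((⟨(τ'.symm ⟨a, h⟩ : Fin n), Nat.lt_succ_of_lt (τ'.symm ⟨a, h⟩).isLt⟩ : Fin (n+1)) : ℕ) < n :=
        (τ'.symm ⟨a, h⟩).isLt
      rw [dif_pos h2]
      apply Fin.ext
      simp
    · simp only [dif_neg h]

def slotIns (j : Fin (n + 1)) : Equiv.Perm (Fin (n + 1)) where
  toFun a := if (a : ℕ) < (j : ℕ) then a
    else if (a : ℕ) = (j : ℕ) then Fin.last n
    else ⟨(a : ℕ) - 1, by omega⟩
  invFun a := if (a : ℕ) < (j : ℕ) then a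
    else if h : (a : ℕ) = n then j
    else ⟨(a : ℕ) + 1, by have h1 := a.isLt; omega⟩
  left_inv := by
    intro a
    have ha := a.isLt
    have hj := j.isLt
    dsimp only
    by_cases h1 : (a : ℕ) < (j : ℕ)
    · rw [if_pos h1, if_pos h1]
    · rw [if_neg h1]
      by_cases h2 : (a : ℕ) = (j : ℕ)
      · rw [if_pos h2]
        rw [if_neg (show ¬ ((Fin.last n : Fin (n+1)) : ℕ) < (j : ℕ) by
            show ¬ n < (j : ℕ); omega),
          dif_pos (show ((Fin.last n : Fin (n+1)) : ℕ) = n from rfl)]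
        exact Fin.ext h2.symm
      · rw [if_neg h2]
        rw [if_neg (show ¬ ((⟨(a : ℕ) - 1, by omega⟩ : Fin (n+1)) : ℕ) < (j : ℕ) by
            show ¬ (a : ℕ) - 1 < (j : ℕ); omega),
          dif_neg (show ¬ ((⟨(a : ℕ) - 1, by omega⟩ : Fin (n+1)) : ℕ) = n by
            show ¬ (a : ℕ) - 1 = n; omega)]
        apply Fin.ext
        show (a : ℕ) - 1 + 1 = (a : ℕ)
        omega
  right_inv := by
    intro a
    have ha := a.isLt
    have hj := j.isLt
    dsimp only
    by_cases h1 : (a : ℕ) < (j : ℕ)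
    · rw [if_pos h1, if_pos h1]
    · rw [if_neg h1]
      by_cases h2 : (a : ℕ) = n
      · rw [dif_pos h2]
        rw [if_neg (lt_irrefl _), if_pos rfl]
        apply Fin.ext
        show n = (a : ℕ)
        omega
      · rw [dif_neg h2]
        rw [if_neg (show ¬ ((⟨(a : ℕ) + 1, by omega⟩ : Fin (n+1)) : ℕ) < (j : ℕ) by
            show ¬ (a : ℕ) + 1 < (j : ℕ); omega),
          if_neg (show ¬ ((⟨(a : ℕ) + 1, by omega⟩ : Fin (n+1)) : ℕ) = (j : ℕ) by
            show ¬ (a : ℕ) + 1 = (j : ℕ); omega)]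
        apply Fin.ext
        show (a : ℕ) + 1 - 1 = (a : ℕ)
        omega

def insB (τ' : Equiv.Perm (Fin n)) (j : Fin (n + 1)) : Equiv.Perm (Fin (n + 1)) :=
  (extL τ') * (slotIns j)

lemma wvB (j : Fin (n + 1)) {i : ℕ} (hi : i < n + 1) :
    wv (insB τ' j) i = if i < (j : ℕ) then wv τ' i
      else if i = (j : ℕ) then n else wv τ' (i - 1) := by
  have hj := j.isLt
  rw [wv_apply _ hi]
  have : (insB τ' j) ⟨i, hi⟩ = (extL τ') ((slotIns j) ⟨i, hi⟩) := rfl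
  rw [this]
  by_cases h1 : i < (j : ℕ)
  · rw [if_pos h1]
    have hs : (slotIns j) ⟨i, hi⟩ = ⟨i, hi⟩ := by
      show (if _ then _ else _) = _
      rw [if_pos h1]
    rw [hs]
    have hin : i < n := by omega
    show ((if h : i < n then _ else _ : Fin (n+1)) : ℕ) = _
    rw [dif_pos hin, wv_apply τ' hin]
  · rw [if_neg h1]
    by_cases h2 : i = (j : ℕ)
    · rw [if_pos h2]
      have hs : (slotIns j) ⟨i, hi⟩ = Fin.last n := by
        show (if _ then _ else _) = _
        rw [if_neg h1, if_pos h2]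
      rw [hs]
      show ((if h : (Fin.last n : ℕ) < n then _ else _ : Fin (n+1)) : ℕ) = _
      rw [dif_neg (by simp [Fin.last])]
      simp [Fin.last]
    · rw [if_neg h2]
      have hs : (slotIns j) ⟨i, hi⟩ = ⟨i - 1, by omega⟩ := by
        show (if _ then _ else _) = _
        rw [if_neg h1, if_neg h2]
      rw [hs]
      have hin : i - 1 < n := by omega
      show ((if h : i - 1 < n then _ else _ : Fin (n+1)) : ℕ) = _
      rw [dif_pos hin, wv_apply τ' hin]

lemma pwB (j : Fin (n + 1)) {i : ℕ} (hi : i ≤ n + 1) :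
    pw (insB τ' j) i = if i ≤ (j : ℕ) then pw τ' i
      else if i = (j : ℕ) + 1 then n + 1 else pw τ' (i - 1) := by
  have hj := j.isLt
  rcases Nat.eq_zero_or_pos i with h0 | h0
  · subst h0
    rw [pw, if_pos rfl, if_pos (by omega), pw, if_pos rfl]
  · rw [pw, if_neg (by omega)]
    by_cases h1 : i ≤ (j : ℕ)
    · rw [if_pos h1, pw, if_neg (by omega)]
      rw [wvB τ' j (by omega : i - 1 < n + 1), if_pos (by omega)]
    · rw [if_neg h1]
      by_cases h2 : i = (j : ℕ) + 1
      · rw [if_pos h2]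
        rw [wvB τ' j (by omega : i - 1 < n + 1), if_neg (by omega), if_pos (by omega)]
      · rw [if_neg h2, pw, if_neg (by omega)]
        rw [wvB τ' j (by omega : i - 1 < n + 1), if_neg (by omega), if_neg (by omega)]

lemma split_insert_sum (s t : ℕ → ℕ) (J n c : ℕ) (hj : J ≤ n)
    (hlow : ∀ i, i < J → s i = t i)
    (hatJ : s J = c) (hatJ1 : J < n → s (J + 1) = 0)
    (hhigh : ∀ i, J + 1 < i → i ≤ n → s i = t (i - 1)) :
    (∑ i ∈ range (n + 1), s i) + (if J < n then t J else 0)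
      = (∑ i ∈ range n, t i) + c := by
  rw [range_eq_Ico, range_eq_Ico]
  rw [← Finset.sum_Ico_consecutive _ (Nat.zero_le J) (by omega : J ≤ n + 1)]
  rw [← Finset.sum_Ico_consecutive _ (Nat.zero_le J) (by omega : J ≤ n)]
  have heq1 : ∑ i ∈ Ico 0 J, s i = ∑ i ∈ Ico 0 J, t i := by
    apply Finset.sum_congr rfl
    intro i hi
    rw [Finset.mem_Ico] at hi
    exact hlow i hi.2
  rw [heq1]
  rw [Finset.sum_eq_sum_Ico_succ_bot (by omega : J < n + 1) s]
  by_cases hJn : J < n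
  · rw [Finset.sum_eq_sum_Ico_succ_bot (by omega : J < n) t]
    rw [Finset.sum_eq_sum_Ico_succ_bot (by omega : J + 1 < n + 1) s]
    have heq2 : ∑ i ∈ Ico (J + 2) (n + 1), s i = ∑ i ∈ Ico (J + 1) n, t i := by
      rw [Finset.sum_Ico_eq_sum_range, Finset.sum_Ico_eq_sum_range]
      have h3 : n + 1 - (J + 2) = n - (J + 1) := by omega
      rw [h3]
      apply Finset.sum_congr rfl
      intro i hi
      rw [mem_range] at hi
      have h4 := hhigh (J + 2 + i) (by omega) (by omega)
      rw [h4]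
      congr 1
      omega
    rw [heq2, hatJ, hatJ1 hJn, if_pos hJn]
    omega
  · have hJeq : J = n := by omega
    rw [if_neg hJn]
    have h1 : ∑ i ∈ Ico (J + 1) (n + 1), s i = 0 := by
      rw [hJeq]
      simp
    have h2 : ∑ i ∈ Ico J n, t i = 0 := by
      rw [hJeq]
      simp
    rw [h1, h2, hatJ]
    omega

lemma insB_edge_sum (R : ℕ → ℕ → Prop) [DecidableRel R] (j : Fin (n + 1))
    (hR : ∀ x, x < n → ¬ R (n + 1) x) :
    (∑ i ∈ range (n + 1), if R (pw (insB τ' j) i) (wv (insB τ' j) i) then 1 else 0)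
      + (if (j : ℕ) < n then (if R (pw τ' (j : ℕ)) (wv τ' (j : ℕ)) then 1 else 0) else 0)
    = (∑ i ∈ range n, if R (pw τ' i) (wv τ' i) then 1 else 0)
      + (if R (pw τ' (j : ℕ)) n then 1 else 0) := by
  have hj : (j : ℕ) ≤ n := by have := j.isLt; omega
  set J := (j : ℕ) with hJ
  set s : ℕ → ℕ := fun i => if R (pw (insB τ' j) i) (wv (insB τ' j) i) then 1 else 0 with hs
  set t : ℕ → ℕ := fun i => if R (pw τ' i) (wv τ' i) then 1 else 0 with ht
  have hlow : ∀ i, i < J → s i = t i := by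
    intro i hiJ
    have hpw : pw (insB τ' j) i = pw τ' i := by
      rw [pwB τ' j (by omega), if_pos (by omega)]
    have hwv : wv (insB τ' j) i = wv τ' i := by
      rw [wvB τ' j (by omega), if_pos (by omega)]
    rw [hs, ht]
    simp only []
    rw [hpw, hwv]
  have hatJ : s J = if R (pw τ' J) n then 1 else 0 := by
    have hpw : pw (insB τ' j) J = pw τ' J := by
      rw [pwB τ' j (by omega), if_pos (by omega)]
    have hwv : wv (insB τ' j) J = n := by
      rw [wvB τ' j (by omega), if_neg (by omega), if_pos (by omega)]
    rw [hs]
    simp only []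
    rw [hpw, hwv]
  have hatJ1 : J < n → s (J + 1) = 0 := by
    intro hJn
    have hpw : pw (insB τ' j) (J + 1) = n + 1 := by
      rw [pwB τ' j (by omega), if_neg (by omega), if_pos (by omega)]
    have hwv : wv (insB τ' j) (J + 1) = wv τ' J := by
      rw [wvB τ' j (by omega), if_neg (by omega), if_neg (by omega), Nat.add_sub_cancel]
    rw [hs]
    simp only []
    rw [hpw, hwv, if_neg (hR _ (wv_lt τ' hJn))]
  have hhigh : ∀ i, J + 1 < i → i ≤ n → s i = t (i - 1) := by
    intro i h1 h2
    have hpw : pw (insB τ' j) i = pw τ' (i - 1) := by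
      rw [pwB τ' j (by omega), if_neg (by omega), if_neg (by omega)]
    have hwv : wv (insB τ' j) i = wv τ' (i - 1) := by
      rw [wvB τ' j (by omega), if_neg (by omega), if_neg (by omega)]
    rw [hs, ht]
    simp only []
    rw [hpw, hwv]
  have main := split_insert_sum s t J n (if R (pw τ' J) n then 1 else 0) hj hlow hatJ hatJ1 hhigh
  have hcor : (if J < n then t J else 0)
      = (if J < n then (if R (pw τ' J) (wv τ' J) then 1 else 0) else 0) := by
    rw [ht]
  rw [hcor] at main
  exact main

lemma lscB (j : Fin (n + 1)) :
    lsc0 (insB τ' j)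
        + (if (j : ℕ) < n then (if wv τ' (j : ℕ) = pw τ' (j : ℕ) then 1 else 0) else 0)
      = lsc0 τ' + (if (n : ℕ) = pw τ' (j : ℕ) then 1 else 0) := by
  have h := insB_edge_sum τ' (fun a b => b = a) j (by intro x hx; omega)
  rw [lsc0, lsc0, card_filter, card_filter]
  exact h

lemma jmpB (j : Fin (n + 1)) :
    jmp0 (insB τ' j)
        + (if (j : ℕ) < n then (if pw τ' (j : ℕ) < wv τ' (j : ℕ) then 1 else 0) else 0)
      = jmp0 τ' + (if pw τ' (j : ℕ) < n then 1 else 0) := by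
  have h := insB_edge_sum τ' (fun a b => a < b) j (by intro x hx; omega)
  rw [jmp0, jmp0, card_filter, card_filter]
  exact h

def clB (τ' : Equiv.Perm (Fin n)) (j : Fin (n + 1)) : Fin 4 :=
  if pw τ' (j : ℕ) = n then 0
  else if (j : ℕ) < n ∧ pw τ' (j : ℕ) < wv τ' (j : ℕ) then 1
  else if (j : ℕ) < n ∧ wv τ' (j : ℕ) = pw τ' (j : ℕ) then 2
  else 3

lemma clB0_iff (j : Fin (n + 1)) : clB τ' j = 0 ↔ pw τ' (j : ℕ) = n := by
  rw [clB]; split_ifs <;> simp_all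

lemma clB1_iff (j : Fin (n + 1)) :
    clB τ' j = 1 ↔ ((j : ℕ) < n ∧ pw τ' (j : ℕ) < wv τ' (j : ℕ)) := by
  have hwl : (j : ℕ) < n → wv τ' (j : ℕ) < n := fun h => wv_lt τ' h
  rw [clB]; split_ifs <;> simp_all
  all_goals omega

lemma clB2_iff (j : Fin (n + 1)) :
    clB τ' j = 2 ↔ ((j : ℕ) < n ∧ wv τ' (j : ℕ) = pw τ' (j : ℕ)) := by
  have hwl : (j : ℕ) < n → wv τ' (j : ℕ) < n := fun h => wv_lt τ' h
  rw [clB]; split_ifs <;> simp_all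
  all_goals omega

lemma clB3_iff (j : Fin (n + 1)) :
    clB τ' j = 3 ↔ (¬ pw τ' (j : ℕ) = n ∧ ¬ ((j : ℕ) < n ∧ pw τ' (j : ℕ) < wv τ' (j : ℕ))
      ∧ ¬ ((j : ℕ) < n ∧ wv τ' (j : ℕ) = pw τ' (j : ℕ))) := by
  rw [clB]; split_ifs <;> simp_all

lemma card_fin_val {P : ℕ → Prop} [DecidablePred P] :
    ((univ : Finset (Fin (n + 1))).filter (fun (j : Fin (n+1)) => (j : ℕ) < n ∧ P (j : ℕ))).card
      = ((range n).filter P).card := by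
  refine Finset.card_bij' (fun j _ => (j : ℕ))
    (fun i hi => (⟨i, by rw [mem_filter, mem_range] at hi; omega⟩ : Fin (n + 1)))
    ?_ ?_ ?_ ?_
  · intro j hj
    rw [mem_filter] at hj
    rw [mem_filter, mem_range]
    exact ⟨hj.2.1, hj.2.2⟩
  · intro i hi
    rw [mem_filter, mem_range] at hi
    rw [mem_filter]
    exact ⟨mem_univ _, hi.1, hi.2⟩
  · intro j hj
    apply Fin.ext
    rfl
  · intro i hi
    rfl

lemma cB0 : ((univ : Finset (Fin (n + 1))).filter fun j => clB τ' j = 0).card = 1 := by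
  have hiff : ∀ j : Fin (n + 1), clB τ' j = 0 ↔ pw τ' (j : ℕ) = n := clB0_iff τ'
  rcases Nat.eq_zero_or_pos n with h0 | h0
  · subst h0
    have : ∀ j : Fin 1, clB τ' j = 0 := by
      intro j
      rw [hiff]
      have : (j : ℕ) = 0 := by omega
      rw [this, pw, if_pos rfl]
    rw [Finset.filter_true_of_mem (fun j _ => this j), card_univ, Fintype.card_fin]
  · have hn1 : n - 1 < n := by omega
    have hi₀ : wv τ'.symm (n - 1) < n := wv_lt τ'.symm hn1
    have key : ((univ : Finset (Fin (n + 1))).filter fun j => clB τ' j = 0)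
        = {(⟨wv τ'.symm (n - 1) + 1, by omega⟩ : Fin (n + 1))} := by
      ext j
      rw [mem_filter, mem_singleton, hiff]
      constructor
      · rintro ⟨-, hp⟩
        have hj0 : (j : ℕ) ≠ 0 := by
          intro hc
          rw [pw, if_pos hc] at hp
          omega
        rw [pw, if_neg hj0] at hp
        have hjn : (j : ℕ) - 1 < n := by have := j.isLt; omega
        have : (j : ℕ) - 1 = wv τ'.symm (n - 1) :=
          (wv_eq_iff τ' hjn hn1).mp (by omega)
        apply Fin.ext
        show (j : ℕ) = wv τ'.symm (n - 1) + 1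
        omega
      · rintro rfl
        refine ⟨mem_univ _, ?_⟩
        rw [pw, if_neg (by simp), Nat.add_sub_cancel, wv_wv_symm τ' hn1]
        omega
    rw [key, card_singleton]

lemma cB1 : ((univ : Finset (Fin (n + 1))).filter fun j => clB τ' j = 1).card = jmp0 τ' := by
  have : ((univ : Finset (Fin (n + 1))).filter fun j => clB τ' j = 1)
      = ((univ : Finset (Fin (n + 1))).filter fun (j : Fin (n+1)) =>
          (j : ℕ) < n ∧ pw τ' (j : ℕ) < wv τ' (j : ℕ)) := by
    apply filter_congr
    intro j _
    exact clB1_iff τ' j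
  rw [this, card_fin_val (P := fun i => pw τ' i < wv τ' i), jmp0]

lemma cB2 : ((univ : Finset (Fin (n + 1))).filter fun j => clB τ' j = 2).card = lsc0 τ' := by
  have : ((univ : Finset (Fin (n + 1))).filter fun j => clB τ' j = 2)
      = ((univ : Finset (Fin (n + 1))).filter fun (j : Fin (n+1)) =>
          (j : ℕ) < n ∧ wv τ' (j : ℕ) = pw τ' (j : ℕ)) := by
    apply filter_congr
    intro j _
    exact clB2_iff τ' j
  rw [this, card_fin_val (P := fun i => wv τ' i = pw τ' i), lsc0]

lemma sideB_count (k m : ℕ) :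
    ((univ : Finset (Fin (n + 1))).filter
        fun j => jmp0 (insB τ' j) = k ∧ lsc0 (insB τ' j) = m).card
      = g n k m (jmp0 τ') (lsc0 τ') := by
  apply count_slots (fun j => jmp0 (insB τ' j)) (fun j => lsc0 (insB τ' j)) (clB τ')
  · intro j hj
    rw [clB0_iff] at hj
    have hl := lscB τ' j
    have hjm := jmpB τ' j
    have hz1 : (if (j : ℕ) < n then (if wv τ' (j : ℕ) = pw τ' (j : ℕ) then 1 else 0) else 0) = 0 := by
      by_cases h : (j : ℕ) < n
      · rw [if_pos h, if_neg (by have := wv_lt τ' h; omega)]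
      · rw [if_neg h]
    have hz2 : (if (j : ℕ) < n then (if pw τ' (j : ℕ) < wv τ' (j : ℕ) then 1 else 0) else 0) = 0 := by
      by_cases h : (j : ℕ) < n
      · rw [if_pos h, if_neg (by have := wv_lt τ' h; omega)]
      · rw [if_neg h]
    rw [hz1, if_pos (by omega)] at hl
    rw [hz2, if_neg (by omega)] at hjm
    exact ⟨by omega, by omega⟩
  · intro j hj
    rw [clB1_iff] at hj
    obtain ⟨hjn, hlt⟩ := hj
    have hwl := wv_lt τ' hjn
    have hl := lscB τ' j
    have hjm := jmpB τ' j
    rw [if_pos hjn, if_neg (by omega), if_neg (by omega)] at hl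
    rw [if_pos hjn, if_pos hlt, if_pos (by omega)] at hjm
    exact ⟨by omega, by omega⟩
  · intro j hj
    rw [clB2_iff] at hj
    obtain ⟨hjn, heq⟩ := hj
    have hwl := wv_lt τ' hjn
    have hl := lscB τ' j
    have hjm := jmpB τ' j
    rw [if_pos hjn, if_pos heq, if_neg (by omega)] at hl
    rw [if_pos hjn, if_neg (by omega), if_pos (by omega)] at hjm
    exact ⟨by omega, by omega⟩
  · intro j hj
    rw [clB3_iff] at hj
    obtain ⟨hns, hnj, hnl⟩ := hj
    have hple : pw τ' (j : ℕ) ≤ n := pw_le τ' _ (by have := j.isLt; omega)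
    have hl := lscB τ' j
    have hjm := jmpB τ' j
    have hz1 : (if (j : ℕ) < n then (if wv τ' (j : ℕ) = pw τ' (j : ℕ) then 1 else 0) else 0) = 0 := by
      by_cases h : (j : ℕ) < n
      · rw [if_pos h, if_neg (fun hc => hnl ⟨h, hc⟩)]
      · rw [if_neg h]
    have hz2 : (if (j : ℕ) < n then (if pw τ' (j : ℕ) < wv τ' (j : ℕ) then 1 else 0) else 0) = 0 := by
      by_cases h : (j : ℕ) < n
      · rw [if_pos h, if_neg (fun hc => hnj ⟨h, hc⟩)]
      · rw [if_neg h]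
    rw [hz1, if_neg (by omega)] at hl
    rw [hz2, if_pos (by omega)] at hjm
    exact ⟨by omega, by omega⟩
  · exact cB0 τ'
  · exact cB1 τ'
  · exact cB2 τ'

lemma wv_ext {σ τ : Equiv.Perm (Fin n)} (h : ∀ i, i < n → wv σ i = wv τ i) : σ = τ := by
  apply Equiv.ext
  intro a
  apply Fin.ext
  have h2 := h (a : ℕ) a.isLt
  rw [wv_apply σ a.isLt, wv_apply τ a.isLt] at h2
  simpa using h2

lemma insB_eq_n_iff (j : Fin (n + 1)) {i : ℕ} (hi : i < n + 1) :
    wv (insB τ' j) i = n ↔ i = (j : ℕ) := by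
  rw [wvB τ' j hi]
  split_ifs with h1 h2
  · have := wv_lt τ' (show i < n by have := j.isLt; omega)
    omega
  · omega
  · have := wv_lt τ' (show i - 1 < n by omega)
    omega

lemma insB_injective :
    Function.Injective (fun x : Equiv.Perm (Fin n) × Fin (n + 1) => insB x.1 x.2) := by
  rintro ⟨τ₁, j₁⟩ ⟨τ₂, j₂⟩ h
  simp only [] at h
  have hj : (j₁ : ℕ) = (j₂ : ℕ) := by
    have h1 : wv (insB τ₁ j₁) (j₁ : ℕ) = n := by
      rw [wvB τ₁ j₁ j₁.isLt, if_neg (lt_irrefl _), if_pos rfl]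
    rw [h] at h1
    exact (insB_eq_n_iff τ₂ j₂ j₁.isLt).mp h1
  have hτ : τ₁ = τ₂ := by
    apply wv_ext
    intro i hi
    by_cases hij : i < (j₁ : ℕ)
    · have e1 : wv (insB τ₁ j₁) i = wv τ₁ i := by
        rw [wvB _ _ (by omega), if_pos hij]
      have e2 : wv (insB τ₂ j₂) i = wv τ₂ i := by
        rw [wvB _ _ (by omega), if_pos (by omega)]
      rw [← e1, h, e2]
    · have e1 : wv (insB τ₁ j₁) (i + 1) = wv τ₁ i := by
        rw [wvB _ _ (by omega), if_neg (by omega), if_neg (by omega), Nat.add_sub_cancel]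
      have e2 : wv (insB τ₂ j₂) (i + 1) = wv τ₂ i := by
        rw [wvB _ _ (by omega), if_neg (by omega), if_neg (by omega), Nat.add_sub_cancel]
      rw [← e1, h, e2]
  rw [Prod.ext_iff]
  exact ⟨hτ, Fin.ext hj⟩

lemma recB (k m : ℕ) :
    ((univ : Finset (Equiv.Perm (Fin (n + 1)))).filter
        fun τ => jmp0 τ = k ∧ lsc0 τ = m).card
      = ∑ τ' : Equiv.Perm (Fin n), g n k m (jmp0 τ') (lsc0 τ') := by
  have hbij : Function.Bijective (fun x : Equiv.Perm (Fin n) × Fin (n + 1) => insB x.1 x.2) := by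
    rw [Fintype.bijective_iff_injective_and_card]
    refine ⟨insB_injective, ?_⟩
    rw [Fintype.card_prod, Fintype.card_perm, Fintype.card_perm, Fintype.card_fin,
      Fintype.card_fin, Nat.factorial_succ]
    ring
  rw [card_filter, ← Equiv.sum_comp (Equiv.ofBijective _ hbij)
      (fun τ => if jmp0 τ = k ∧ lsc0 τ = m then 1 else 0)]
  rw [Fintype.sum_prod_type]
  apply Finset.sum_congr rfl
  intro τ' _
  rw [← sideB_count τ' k m, card_filter]
  rfl

end SideB

lemma stat_le {n : ℕ} (P : ℕ → Prop) [DecidablePred P] :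
    ((range n).filter P).card ≤ n :=
  le_trans (Finset.card_filter_le _ _) (le_of_eq (card_range n))

lemma sum_fiber {α : Type*} [Fintype α] [DecidableEq α] (u v : α → ℕ) (N k m : ℕ)
    (hu : ∀ a, u a ≤ N) (hv : ∀ a, v a ≤ N) :
    ∑ a : α, g N k m (u a) (v a)
      = ∑ e ∈ range (N + 1), ∑ f ∈ range (N + 1),
          ((univ : Finset α).filter (fun a => u a = e ∧ v a = f)).card * g N k m e f := by
  have hcell : ∀ e f : ℕ,
      ((univ : Finset α).filter (fun a => u a = e ∧ v a = f)).card * g N k m e f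
        = ∑ a : α, (if u a = e ∧ v a = f then g N k m e f else 0) := by
    intro e f
    rw [card_filter, Finset.sum_mul]
    apply Finset.sum_congr rfl
    intro a _
    rw [ite_mul, one_mul, zero_mul]
  calc ∑ a : α, g N k m (u a) (v a)
      = ∑ a : α, ∑ e ∈ range (N + 1), ∑ f ∈ range (N + 1),
          (if u a = e ∧ v a = f then g N k m e f else 0) := by
        apply Finset.sum_congr rfl
        intro a _
        rw [Finset.sum_eq_single_of_mem (u a) (mem_range.mpr (by have := hu a; omega))]
        · rw [Finset.sum_eq_single_of_mem (v a) (mem_range.mpr (by have := hv a; omega))]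
          · rw [if_pos ⟨rfl, rfl⟩]
          · intro f _ hf
            rw [if_neg (by rintro ⟨-, h⟩; exact hf h.symm)]
        · intro e _ he
          rw [Finset.sum_eq_zero]
          intro f _
          rw [if_neg (by rintro ⟨h1, -⟩; exact he h1.symm)]
    _ = ∑ e ∈ range (N + 1), ∑ f ∈ range (N + 1), ∑ a : α,
          (if u a = e ∧ v a = f then g N k m e f else 0) := by
        rw [Finset.sum_comm]
        apply Finset.sum_congr rfl
        intro e _
        rw [Finset.sum_comm]
    _ = ∑ e ∈ range (N + 1), ∑ f ∈ range (N + 1),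
          ((univ : Finset α).filter (fun a => u a = e ∧ v a = f)).card * g N k m e f := by
        apply Finset.sum_congr rfl
        intro e _
        apply Finset.sum_congr rfl
        intro f _
        rw [hcell]

lemma main0 : ∀ n k m : ℕ,
    ((univ : Finset (Equiv.Perm (Fin n))).filter fun σ => exc0 σ = k ∧ fix0 σ = m).card
      = ((univ : Finset (Equiv.Perm (Fin n))).filter fun τ => jmp0 τ = k ∧ lsc0 τ = m).card := by
  intro n
  induction n with
  | zero =>
    intro k m
    have h1 : (univ : Finset (Equiv.Perm (Fin 0))) = {1} := by
      apply Finset.eq_singleton_iff_unique_mem.mpr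
      exact ⟨mem_univ _, fun x _ => Subsingleton.elim x 1⟩
    rw [h1, filter_singleton, filter_singleton]
    have e0 : exc0 (1 : Equiv.Perm (Fin 0)) = 0 := by rw [exc0]; simp
    have f0 : fix0 (1 : Equiv.Perm (Fin 0)) = 0 := by rw [fix0]; simp
    have j0 : jmp0 (1 : Equiv.Perm (Fin 0)) = 0 := by rw [jmp0]; simp
    have l0 : lsc0 (1 : Equiv.Perm (Fin 0)) = 0 := by rw [lsc0]; simp
    rw [e0, f0, j0, l0]
  | succ n ih =>
    intro k m
    rw [recA, recB]
    rw [sum_fiber (fun σ => exc0 σ) (fun σ => fix0 σ) n k m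
      (fun σ => stat_le _) (fun σ => stat_le _)]
    rw [sum_fiber (fun τ => jmp0 τ) (fun τ => lsc0 τ) n k m
      (fun τ => stat_le _) (fun τ => stat_le _)]
    apply Finset.sum_congr rfl
    intro e _
    apply Finset.sum_congr rfl
    intro f _
    rw [ih e f]

end EFJL

theorem exc_fix_equidistributed_jump_lsuc (n k m : ℕ) (hn : 1 ≤ n) :
    ((Finset.univ : Finset (Equiv.Perm (Fin n))).filter
        (fun σ => exc σ = k ∧ fixpt σ = m)).card =
    ((Finset.univ : Finset (Equiv.Perm (Fin n))).filter
        (fun τ => jump τ = k ∧ lsuc τ = m)).card := by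
  have h := EFJL.main0 n k m
  have e1 : ((Finset.univ : Finset (Equiv.Perm (Fin n))).filter
      (fun σ => exc σ = k ∧ fixpt σ = m))
      = ((Finset.univ : Finset (Equiv.Perm (Fin n))).filter
      (fun σ => EFJL.exc0 σ = k ∧ EFJL.fix0 σ = m)) := by
    apply Finset.filter_congr
    intro σ _
    rw [EFJL.exc_eq, EFJL.fixpt_eq]
  have e2 : ((Finset.univ : Finset (Equiv.Perm (Fin n))).filter
      (fun τ => jump τ = k ∧ lsuc τ = m))
      = ((Finset.univ : Finset (Equiv.Perm (Fin n))).filter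
      (fun τ => EFJL.jmp0 τ = k ∧ EFJL.lsc0 τ = m)) := by
    apply Finset.filter_congr
    intro τ _
    rw [EFJL.jump_eq, EFJL.lsuc_eq]
  rw [e1, e2]
  exact h
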